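/- The minimum positive semidefinite rank of the Clebsch graph is 8. -/

import Mathlib

/-- `M` has the off-diagonal zero pattern of `G`, i.e. `M ∈ S(G)` up to symmetry. -/
def matchesGraph {V : Type*} (G : SimpleGraph V) (M : Matrix V V ℝ) : Prop :=
  ∀ i j : V, i ≠ j → (M i j = 0 ↔ ¬ G.Adj i j)

/-- The Clebsch graph: vertices are 4-bit strings, adjacent iff they differ
in exactly one bit or in all four bits. -/
def clebsch : SimpleGraph (Fin 4 → Bool) :=
  SimpleGraph.fromRel (fun u v =>
    (Finset.univ.filter fun i => u i ≠ v i).card = 1 ∨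
    (Finset.univ.filter fun i => u i ≠ v i).card = 4)

/-- The minimum positive semidefinite rank of a graph. -/
noncomputable def mrPlus {V : Type*} [Fintype V] [DecidableEq V]
    (G : SimpleGraph V) : ℕ :=
  sInf {r | ∃ M : Matrix V V ℝ, matchesGraph G M ∧ M.PosSemidef ∧ M.rank = r}


namespace ClebschAux
open Matrix

abbrev V : Type := Fin 4 → Bool

instance instAdjDec : DecidableRel clebsch.Adj := fun u v =>
  decidable_of_iff' _ (SimpleGraph.fromRel_adj _ u v)

def tbl : List (List ℤ) :=
  [ [0, -1, -1, 0, 1, 0, 0, 0, -1, 0, 0, 0, 0, 0, 0, 1],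
  [-1, 0, 0, -1, 0, 1, 0, 0, 0, -1, 0, 0, 0, 0, 1, 0],
  [-1, 0, 0, 1, 0, 0, -1, 0, 0, 0, 1, 0, 0, 1, 0, 0],
  [0, -1, 1, 0, 0, 0, 0, -1, 0, 0, 0, 1, 1, 0, 0, 0],
  [1, 0, 0, 0, 0, 1, -1, 0, 0, 0, 0, -1, 1, 0, 0, 0],
  [0, 1, 0, 0, 1, 0, 0, -1, 0, 0, -1, 0, 0, 1, 0, 0],
  [0, 0, -1, 0, -1, 0, 0, -1, 0, 1, 0, 0, 0, 0, 1, 0],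
  [0, 0, 0, -1, 0, -1, -1, 0, 1, 0, 0, 0, 0, 0, 0, 1],
  [-1, 0, 0, 0, 0, 0, 0, 1, 0, 1, -1, 0, 1, 0, 0, 0],
  [0, -1, 0, 0, 0, 0, 1, 0, 1, 0, 0, -1, 0, 1, 0, 0],
  [0, 0, 1, 0, 0, -1, 0, 0, -1, 0, 0, -1, 0, 0, 1, 0],
  [0, 0, 0, 1, -1, 0, 0, 0, 0, -1, -1, 0, 0, 0, 0, 1],
  [0, 0, 0, 1, 1, 0, 0, 0, 1, 0, 0, 0, 0, -1, 1, 0],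
  [0, 0, 1, 0, 0, 1, 0, 0, 0, 1, 0, 0, -1, 0, 0, 1],
  [0, 1, 0, 0, 0, 0, 1, 0, 0, 0, 1, 0, 1, 0, 0, 1],
  [1, 0, 0, 0, 0, 0, 0, 1, 0, 0, 0, 1, 0, 1, 1, 0] ]

def idx (u : V) : ℕ := (u 0).toNat + 2 * (u 1).toNat + 4 * (u 2).toNat + 8 * (u 3).toNat

def bz : Matrix V V ℤ := Matrix.of fun u v => ((tbl[idx u]?.getD [])[idx v]?).getD 0

set_option maxRecDepth 100000 in
lemma bz_mul : ∀ u v : V, (∑ x : V, bz u x * bz x v) = if u = v then 5 else 0 := by decide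

lemma bz_symm : ∀ u v : V, bz v u = bz u v :=
  @of_decide_eq_true _ (@Fintype.decidableForallFintype V _ (fun u => @Fintype.decidableForallFintype V _ (fun v => Int.decEq _ _) _) _) rfl

set_option maxRecDepth 100000 in
lemma bz_pattern : ∀ u v : V, u ≠ v → (bz u v = 0 ↔ ¬ clebsch.Adj u v) :=
  @of_decide_eq_true _ (@Fintype.decidableForallFintype V _ (fun u => @Fintype.decidableForallFintype V _ (fun v => @instDecidableForall _ _ _ (@instDecidableIff _ _ (Int.decEq _ _) _)) _) _) rfl

noncomputable def Bmat : Matrix V V ℝ := bz.map (Int.cast)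

lemma Bmat_transpose : Bmatᵀ = Bmat := by
  ext u v
  simp only [Matrix.transpose_apply, Bmat, Matrix.map_apply, bz_symm u v]

lemma Bmat_mul : Bmat * Bmat = (5 : ℝ) • (1 : Matrix V V ℝ) := by
  ext u v
  rw [Matrix.mul_apply]
  simp only [Bmat, Matrix.map_apply]
  rw [show (∑ x : V, ((bz u x : ℝ) * (bz x v : ℝ))) = ((∑ x : V, bz u x * bz x v : ℤ) : ℝ) by
    push_cast; rfl]
  rw [bz_mul u v]
  by_cases h : u = v <;>
    simp [h, Matrix.smul_apply, Matrix.one_apply]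

/-- The key forcing step. -/
lemma step (M : Matrix V V ℝ) (hM : M.PosSemidef) (hG : matchesGraph clebsch M)
    (c : V → ℝ) (hc : M *ᵥ c = 0)
    (U W : Finset V)
    (hsupp : ∀ x : V, x ∉ U → c x = 0)
    (hWU : W ⊆ U)
    (hsep : ∀ x ∈ W, ∀ y ∈ U, y ∉ W → ¬ clebsch.Adj x y)
    (u w : V) (huW : u ∉ W) (hw : w ∈ W) (hadj : clebsch.Adj u w)
    (huniq : ∀ x ∈ W, x ≠ w → ¬ clebsch.Adj u x) :
    c w = 0 := by
  classical
  set c₁ : V → ℝ := fun x => if x ∈ W then c x else 0 with hc₁def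
  set c₂ : V → ℝ := fun x => if x ∈ W then 0 else c x with hc₂def
  have hsum : c = c₁ + c₂ := by
    funext x; by_cases h : x ∈ W <;> simp [hc₁def, hc₂def, h]
  have hMc₂ : ∀ x ∈ W, (M *ᵥ c₂) x = 0 := by
    intro x hx
    rw [Matrix.mulVec, dotProduct]
    refine Finset.sum_eq_zero fun y _ => ?_
    by_cases hyW : y ∈ W
    · simp [hc₂def, hyW]
    · by_cases hyU : y ∈ U
      · have hne : x ≠ y := fun h => hyW (h ▸ hx)
        have : M x y = 0 := (hG x y hne).mpr (hsep x hx y hyU hyW)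
        simp [this]
      · simp [hc₂def, hyW, hsupp y hyU]
  have hcross : c₁ ⬝ᵥ (M *ᵥ c₂) = 0 := by
    rw [dotProduct]
    refine Finset.sum_eq_zero fun x _ => ?_
    by_cases hx : x ∈ W
    · rw [hMc₂ x hx, mul_zero]
    · simp [hc₁def, hx]
  have hq : c₁ ⬝ᵥ (M *ᵥ c₁) = 0 := by
    have h1 : M *ᵥ c₁ = (M *ᵥ c) - (M *ᵥ c₂) := by
      rw [hsum, Matrix.mulVec_add]; abel
    rw [h1, hc]
    simp [dotProduct_sub, hcross]
  have hker : M *ᵥ c₁ = 0 :=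
    (hM.dotProduct_mulVec_zero_iff c₁).mp (by simpa using hq)
  have hrow : (M *ᵥ c₁) u = 0 := by rw [hker]; rfl
  rw [Matrix.mulVec, dotProduct] at hrow
  rw [Finset.sum_eq_single w (fun y _ hyw => ?_) (fun h => absurd (Finset.mem_univ w) h)] at hrow
  · have hWc : c₁ w = c w := by simp [hc₁def, hw]
    rw [hWc] at hrow
    have hMuw : M u w ≠ 0 := fun h => (hG u w hadj.ne).mp h hadj
    exact (mul_eq_zero.mp hrow).resolve_left hMuw
  · by_cases hyW : y ∈ W
    · have hne : u ≠ y := fun h => huW (h ▸ hyW)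
      have : M u y = 0 := (hG u y hne).mpr (huniq y hyW hyw)
      simp [this]
    · simp [hc₁def, hyW]

lemma kernel_vanish (M : Matrix V V ℝ) (hM : M.PosSemidef) (hG : matchesGraph clebsch M)
    (c : V → ℝ) (hc : M *ᵥ c = 0)
    (h0_0 : c (![false, false, false, false]) = 0) (h0_1 : c (![false, true, false, false]) = 0)
    (h0_2 : c (![true, true, false, false]) = 0) (h0_3 : c (![false, false, true, false]) = 0)
    (h0_4 : c (![true, true, true, false]) = 0) (h0_5 : c (![false, true, false, true]) = 0)
    (h0_6 : c (![true, false, true, true]) = 0) (h0_7 : c (![false, true, true, true]) = 0) :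
    c = 0 := by
  have hstep0 : c ![false, true, true, false] = 0 := by
    refine step M hM hG c hc ({![true, false, false, false], ![true, false, true, false], ![false, true, true, false], ![false, false, false, true], ![true, false, false, true], ![true, true, false, true], ![false, false, true, true], ![true, true, true, true]} : Finset V) ({![true, false, false, false], ![true, false, true, false], ![false, true, true, false], ![false, false, false, true], ![true, false, false, true], ![true, true, false, true], ![false, false, true, true], ![true, true, true, true]} : Finset V) ?_ (by decide) (by decide)
      ![false, true, false, false] ![false, true, true, false] (by decide) (by decide) (by decide) (by decide)
    · have key : ∀ x : V, x ∉ ({![true, false, false, false], ![true, false, true, false], ![false, true, true, false], ![false, false, false, true], ![true, false, false, true], ![true, true, false, true], ![false, false, true, true], ![true, true, true, true]} : Finset V) → x ∈ ({![false, false, false, false], ![false, true, false, false], ![true, true, false, false], ![false, false, true, false], ![true, true, true, false], ![false, true, false, true], ![true, false, true, true], ![false, true, true, true]} : Finset V) := by decide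
      intro x hx
      have hmem := key x hx
      fin_cases hmem <;> assumption
  have hstep1 : c ![true, false, false, true] = 0 := by
    refine step M hM hG c hc ({![true, false, false, false], ![true, false, true, false], ![false, false, false, true], ![true, false, false, true], ![true, true, false, true], ![false, false, true, true], ![true, true, true, true]} : Finset V) ({![true, false, false, false], ![true, false, true, false], ![false, false, false, true], ![true, false, false, true], ![true, true, false, true], ![false, false, true, true], ![true, true, true, true]} : Finset V) ?_ (by decide) (by decide)
      ![false, true, true, false] ![true, false, false, true] (by decide) (by decide) (by decide) (by decide)
    · have key : ∀ x : V, x ∉ ({![true, false, false, false], ![true, false, true, false], ![false, false, false, true], ![true, false, false, true], ![true, true, false, true], ![false, false, true, true], ![true, true, true, true]} : Finset V) → x ∈ ({![false, false, false, false], ![false, true, false, false], ![true, true, false, false], ![false, false, true, false], ![true, true, true, false], ![false, true, false, true], ![true, false, true, true], ![false, true, true, true], ![false, true, true, false]} : Finset V) := by decide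
      intro x hx
      have hmem := key x hx
      fin_cases hmem <;> assumption
  have hstep2 : c ![true, false, false, false] = 0 := by
    refine step M hM hG c hc ({![true, false, false, false], ![true, false, true, false], ![false, false, false, true], ![true, true, false, true], ![false, false, true, true], ![true, true, true, true]} : Finset V) ({![true, false, false, false], ![true, false, true, false]} : Finset V) ?_ (by decide) (by decide)
      ![false, false, false, false] ![true, false, false, false] (by decide) (by decide) (by decide) (by decide)
    · have key : ∀ x : V, x ∉ ({![true, false, false, false], ![true, false, true, false], ![false, false, false, true], ![true, true, false, true], ![false, false, true, true], ![true, true, true, true]} : Finset V) → x ∈ ({![false, false, false, false], ![false, true, false, false], ![true, true, false, false], ![false, false, true, false], ![true, true, true, false], ![false, true, false, true], ![true, false, true, true], ![false, true, true, true], ![false, true, true, false], ![true, false, false, true]} : Finset V) := by decide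
      intro x hx
      have hmem := key x hx
      fin_cases hmem <;> assumption
  have hstep3 : c ![true, false, true, false] = 0 := by
    refine step M hM hG c hc ({![true, false, true, false], ![false, false, false, true], ![true, true, false, true], ![false, false, true, true], ![true, true, true, true]} : Finset V) ({![true, false, true, false]} : Finset V) ?_ (by decide) (by decide)
      ![true, false, false, false] ![true, false, true, false] (by decide) (by decide) (by decide) (by decide)
    · have key : ∀ x : V, x ∉ ({![true, false, true, false], ![false, false, false, true], ![true, true, false, true], ![false, false, true, true], ![true, true, true, true]} : Finset V) → x ∈ ({![false, false, false, false], ![false, true, false, false], ![true, true, false, false], ![false, false, true, false], ![true, true, true, false], ![false, true, false, true], ![true, false, true, true], ![false, true, true, true], ![false, true, true, false], ![true, false, false, true], ![true, false, false, false]} : Finset V) := by decide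
      intro x hx
      have hmem := key x hx
      fin_cases hmem <;> assumption
  have hstep4 : c ![false, false, false, true] = 0 := by
    refine step M hM hG c hc ({![false, false, false, true], ![true, true, false, true], ![false, false, true, true], ![true, true, true, true]} : Finset V) ({![false, false, false, true], ![false, false, true, true]} : Finset V) ?_ (by decide) (by decide)
      ![false, false, false, false] ![false, false, false, true] (by decide) (by decide) (by decide) (by decide)
    · have key : ∀ x : V, x ∉ ({![false, false, false, true], ![true, true, false, true], ![false, false, true, true], ![true, true, true, true]} : Finset V) → x ∈ ({![false, false, false, false], ![false, true, false, false], ![true, true, false, false], ![false, false, true, false], ![true, true, true, false], ![false, true, false, true], ![true, false, true, true], ![false, true, true, true], ![false, true, true, false], ![true, false, false, true], ![true, false, false, false], ![true, false, true, false]} : Finset V) := by decide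
      intro x hx
      have hmem := key x hx
      fin_cases hmem <;> assumption
  have hstep5 : c ![true, true, true, true] = 0 := by
    refine step M hM hG c hc ({![true, true, false, true], ![false, false, true, true], ![true, true, true, true]} : Finset V) ({![true, true, false, true], ![true, true, true, true]} : Finset V) ?_ (by decide) (by decide)
      ![false, false, false, false] ![true, true, true, true] (by decide) (by decide) (by decide) (by decide)
    · have key : ∀ x : V, x ∉ ({![true, true, false, true], ![false, false, true, true], ![true, true, true, true]} : Finset V) → x ∈ ({![false, false, false, false], ![false, true, false, false], ![true, true, false, false], ![false, false, true, false], ![true, true, true, false], ![false, true, false, true], ![true, false, true, true], ![false, true, true, true], ![false, true, true, false], ![true, false, false, true], ![true, false, false, false], ![true, false, true, false], ![false, false, false, true]} : Finset V) := by decide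
      intro x hx
      have hmem := key x hx
      fin_cases hmem <;> assumption
  have hstep6 : c ![true, true, false, true] = 0 := by
    refine step M hM hG c hc ({![true, true, false, true], ![false, false, true, true]} : Finset V) ({![true, true, false, true]} : Finset V) ?_ (by decide) (by decide)
      ![true, true, false, false] ![true, true, false, true] (by decide) (by decide) (by decide) (by decide)
    · have key : ∀ x : V, x ∉ ({![true, true, false, true], ![false, false, true, true]} : Finset V) → x ∈ ({![false, false, false, false], ![false, true, false, false], ![true, true, false, false], ![false, false, true, false], ![true, true, true, false], ![false, true, false, true], ![true, false, true, true], ![false, true, true, true], ![false, true, true, false], ![true, false, false, true], ![true, false, false, false], ![true, false, true, false], ![false, false, false, true], ![true, true, true, true]} : Finset V) := by decide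
      intro x hx
      have hmem := key x hx
      fin_cases hmem <;> assumption
  have hstep7 : c ![false, false, true, true] = 0 := by
    refine step M hM hG c hc ({![false, false, true, true]} : Finset V) ({![false, false, true, true]} : Finset V) ?_ (by decide) (by decide)
      ![true, true, false, false] ![false, false, true, true] (by decide) (by decide) (by decide) (by decide)
    · have key : ∀ x : V, x ∉ ({![false, false, true, true]} : Finset V) → x ∈ ({![false, false, false, false], ![false, true, false, false], ![true, true, false, false], ![false, false, true, false], ![true, true, true, false], ![false, true, false, true], ![true, false, true, true], ![false, true, true, true], ![false, true, true, false], ![true, false, false, true], ![true, false, false, false], ![true, false, true, false], ![false, false, false, true], ![true, true, true, true], ![true, true, false, true]} : Finset V) := by decide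
      intro x hx
      have hmem := key x hx
      fin_cases hmem <;> assumption
  funext x
  have key : ∀ x : V, x ∈ ({![false, false, false, false], ![false, true, false, false], ![true, true, false, false], ![false, false, true, false], ![true, true, true, false], ![false, true, false, true], ![true, false, true, true], ![false, true, true, true], ![false, true, true, false], ![true, false, false, true], ![true, false, false, false], ![true, false, true, false], ![false, false, false, true], ![true, true, true, true], ![true, true, false, true], ![false, false, true, true]} : Finset V) := by decide
  have hmem := key x
  show c x = 0
  fin_cases hmem <;> assumption

end ClebschAux
namespace ClebschAux
open Matrix

lemma card_V : Fintype.card V = 16 := by decide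

lemma finrank_pi_V : Module.finrank ℝ (V → ℝ) = 16 := by
  rw [Module.finrank_pi, card_V]

/-- Lower bound: every PSD matrix matching the Clebsch graph has rank at least 8. -/
lemma rank_lower (M : Matrix V V ℝ) (hM : M.PosSemidef) (hG : matchesGraph clebsch M) :
    8 ≤ M.rank := by
  classical
  let f : Fin 8 → V := ![![false,false,false,false], ![false,true,false,false],
    ![true,true,false,false], ![false,false,true,false], ![true,true,true,false],
    ![false,true,false,true], ![true,false,true,true], ![false,true,true,true]]
  let φ : (LinearMap.ker M.mulVecLin) →ₗ[ℝ] (Fin 8 → ℝ) :=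
    (LinearMap.funLeft ℝ ℝ f).comp (LinearMap.ker M.mulVecLin).subtype
  have hφ : Function.Injective φ := by
    rw [injective_iff_map_eq_zero]
    rintro ⟨cvec, hcmem⟩ hz
    have hc : M *ᵥ cvec = 0 := by
      simpa [Matrix.mulVecLin_apply] using (LinearMap.mem_ker.mp hcmem)
    have hz' : ∀ i : Fin 8, cvec (f i) = 0 := fun i => congrFun hz i
    have : cvec = 0 := by
      refine kernel_vanish M hM hG cvec hc ?_ ?_ ?_ ?_ ?_ ?_ ?_ ?_
      · exact hz' 0
      · exact hz' 1
      · exact hz' 2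
      · exact hz' 3
      · exact hz' 4
      · exact hz' 5
      · exact hz' 6
      · exact hz' 7
    exact Subtype.ext this
  have hker : Module.finrank ℝ (LinearMap.ker M.mulVecLin) ≤ 8 := by
    have := LinearMap.finrank_le_finrank_of_injective hφ
    simpa [Module.finrank_pi] using this
  have hrn := LinearMap.finrank_range_add_finrank_ker M.mulVecLin
  rw [finrank_pi_V] at hrn
  have : M.rank = Module.finrank ℝ (LinearMap.range M.mulVecLin) := rfl
  omega

noncomputable def Mp : Matrix V V ℝ := Real.sqrt 5 • (1 : Matrix V V ℝ) + Bmat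
noncomputable def Mm : Matrix V V ℝ := Real.sqrt 5 • (1 : Matrix V V ℝ) - Bmat

lemma sqrt5_pos : (0:ℝ) < Real.sqrt 5 := Real.sqrt_pos.mpr (by norm_num)

lemma sqrt5_sq : Real.sqrt 5 * Real.sqrt 5 = 5 := Real.mul_self_sqrt (by norm_num)

lemma Mp_mul_Mm : Mp * Mm = 0 := by
  unfold Mp Mm
  rw [add_mul, mul_sub, mul_sub, smul_mul_assoc, one_mul, smul_mul_assoc, one_mul,
    mul_smul_comm, mul_one, Bmat_mul, smul_smul, sqrt5_sq]
  abel

lemma Mp_mul_Mp : Mp * Mp = (2 * Real.sqrt 5) • Mp := by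
  unfold Mp
  rw [add_mul, mul_add, mul_add, smul_mul_assoc, one_mul, smul_mul_assoc, one_mul,
    mul_smul_comm, mul_one, Bmat_mul, smul_smul, sqrt5_sq, smul_add, smul_smul]
  rw [show (2 * Real.sqrt 5) * Real.sqrt 5 = 5 + 5 by rw [mul_assoc, sqrt5_sq]; ring]
  rw [add_smul]
  module

lemma Mm_mul_Mm : Mm * Mm = (2 * Real.sqrt 5) • Mm := by
  unfold Mm
  rw [sub_mul, mul_sub, mul_sub, smul_mul_assoc, one_mul, smul_mul_assoc, one_mul,
    mul_smul_comm, mul_one, Bmat_mul, smul_smul, sqrt5_sq, smul_sub, smul_smul]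
  rw [show (2 * Real.sqrt 5) * Real.sqrt 5 = 5 + 5 by rw [mul_assoc, sqrt5_sq]; ring]
  rw [add_smul]
  module

lemma Mp_transpose : Mpᵀ = Mp := by
  unfold Mp
  rw [transpose_add, transpose_smul, transpose_one, Bmat_transpose]

lemma Mm_transpose : Mmᵀ = Mm := by
  unfold Mm
  rw [transpose_sub, transpose_smul, transpose_one, Bmat_transpose]

lemma psd_of_sq {A : Matrix V V ℝ} (hT : Aᵀ = A) (hsq : A * A = (2 * Real.sqrt 5) • A) :
    A.PosSemidef := by
  rw [Matrix.posSemidef_iff_dotProduct_mulVec]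
  constructor
  · exact hT
  · intro x
    have key : (2 * Real.sqrt 5) * (star x ⬝ᵥ A *ᵥ x) = (A *ᵥ x) ⬝ᵥ (A *ᵥ x) := by
      have h1 : star x ⬝ᵥ (A * A) *ᵥ x = (A *ᵥ x) ⬝ᵥ (A *ᵥ x) := by
        rw [← Matrix.mulVec_mulVec, Matrix.dotProduct_mulVec, star_trivial]
        congr 1
        rw [← Matrix.mulVec_transpose, hT]
      rw [← h1, hsq, Matrix.smul_mulVec, dotProduct_smul, smul_eq_mul]
    have hpos : (0:ℝ) < 2 * Real.sqrt 5 := by positivity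
    have hnn : (0:ℝ) ≤ (A *ᵥ x) ⬝ᵥ (A *ᵥ x) := by
      rw [dotProduct]
      exact Finset.sum_nonneg fun i _ => mul_self_nonneg _
    nlinarith [key]

lemma Mp_psd : Mp.PosSemidef := psd_of_sq Mp_transpose Mp_mul_Mp
lemma Mm_psd : Mm.PosSemidef := psd_of_sq Mm_transpose Mm_mul_Mm

lemma Mp_matches : matchesGraph clebsch Mp := by
  intro i j hij
  have : Mp i j = (bz i j : ℝ) := by
    simp [Mp, Matrix.add_apply, Matrix.smul_apply, Matrix.one_apply, hij, Bmat, Matrix.map_apply]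
  rw [this, Int.cast_eq_zero]
  exact bz_pattern i j hij

lemma Mm_matches : matchesGraph clebsch Mm := by
  intro i j hij
  have : Mm i j = -(bz i j : ℝ) := by
    simp [Mm, Matrix.sub_apply, Matrix.smul_apply, Matrix.one_apply, hij, Bmat, Matrix.map_apply]
  rw [this, neg_eq_zero, Int.cast_eq_zero]
  exact bz_pattern i j hij

lemma Mp_rank_le : Mp.rank ≤ 8 := by
  classical
  have hle : LinearMap.range Mm.mulVecLin ≤ LinearMap.ker Mp.mulVecLin := by
    rintro y ⟨x, rfl⟩
    rw [LinearMap.mem_ker]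
    simp only [Matrix.mulVecLin_apply, Matrix.mulVec_mulVec, Mp_mul_Mm]
    simp
  have h1 : Mm.rank ≤ Module.finrank ℝ (LinearMap.ker Mp.mulVecLin) :=
    Submodule.finrank_mono hle
  have hrn := LinearMap.finrank_range_add_finrank_ker Mp.mulVecLin
  rw [finrank_pi_V] at hrn
  have h2 : 8 ≤ Mm.rank := rank_lower Mm Mm_psd Mm_matches
  have h3 : Mp.rank = Module.finrank ℝ (LinearMap.range Mp.mulVecLin) := rfl
  omega

lemma Mp_rank : Mp.rank = 8 :=
  le_antisymm Mp_rank_le (rank_lower Mp Mp_psd Mp_matches)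

end ClebschAux

theorem clebsch_mrPlus_eq_eight : mrPlus clebsch = 8 := by
  classical
  have hmem : 8 ∈ {r | ∃ M : Matrix (Fin 4 → Bool) (Fin 4 → Bool) ℝ,
      matchesGraph clebsch M ∧ M.PosSemidef ∧ M.rank = r} :=
    ⟨ClebschAux.Mp, ClebschAux.Mp_matches, ClebschAux.Mp_psd, ClebschAux.Mp_rank⟩
  have hlb : ∀ r ∈ {r | ∃ M : Matrix (Fin 4 → Bool) (Fin 4 → Bool) ℝ,
      matchesGraph clebsch M ∧ M.PosSemidef ∧ M.rank = r}, 8 ≤ r := by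
    rintro r ⟨M, hG, hpsd, rfl⟩
    exact ClebschAux.rank_lower M hpsd hG
  exact le_antisymm (Nat.sInf_le hmem) (le_csInf ⟨8, hmem⟩ hlb)
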